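/- Let $\mu>0$, $\sigma>0$, $r>0$, $\beta>0$, $l>0$, $0<p<1$, and suppose $\kappa>0$ where $\kappa:=\frac{\beta-p\left(\frac{\mu^2}{2\sigma^2(1-p)}+r\right)}{1-p}$. Let $\lambda_1<0$ and $\lambda_2>1$ be the two roots of $f(\lambda):=-\frac{\mu^2}{2\sigma^2}\lambda(\lambda-1)+(r-\beta)\lambda+\beta$, and set $C:=\left(\frac{\lambda_1-1}{r}-\frac{\lambda_1}{\beta p}+\frac{(1-p)\lambda_1}{p\kappa}+\frac{1}{\kappa}\right)\frac{l^{\,p+\lambda_2(1-p)}}{\lambda_2-\lambda_1}$ and $D:=\left(\frac{\lambda_2-1}{r}-\frac{\lambda_2}{\beta p}+\frac{(1-p)\lambda_2}{p\kappa}+\frac{1}{\kappa}\right)\frac{l^{\,p+\lambda_1(1-p)}}{\lambda_2-\lambda_1}$. Define $v:(0,\infty)\to\mathbb{R}$ by $v(y)=C\,y^{\lambda_2}+\frac{1-p}{p\kappa}\,y^{p/(p-1)}$ for $0<y\le l^{p-1}$ and $v(y)=D\,y^{\lambda_1}+\frac{l^p}{\beta p}-\frac{l}{r}\,y$ for $y\ge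 l^{p-1}$. Then $v$ is well-defined (the two formulas agree at $y=l^{p-1}$), continuously differentiable on $(0,\infty)$, and satisfies $-\frac{\mu^2}{2\sigma^2}y^2 v''(y)+(r-\beta)y\,v'(y)+\beta\,v(y)=\frac{1-p}{p}\,y^{p/(p-1)}$ for $0<y<l^{p-1}$ and $-\frac{\mu^2}{2\sigma^2}y^2 v''(y)+(r-\beta)y\,v'(y)+\beta\,v(y)=\frac{l^p}{p}-l\,y$ for $y>l^{p-1}$. -/

import Mathlib

open Real Set Filter Topology

private lemma rpow_shift1 {y : ℝ} (hy : 0 < y) (lam : ℝ) :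
    y ^ (lam - 1) = y ^ lam / y := by
  rw [Real.rpow_sub hy, Real.rpow_one]

private lemma euler_term {y : ℝ} (hy : 0 < y) (a r β c lam : ℝ) :
    -a * y ^ 2 * (c * (lam * ((lam - 1) * y ^ (lam - 1 - 1))))
      + (r - β) * y * (c * (lam * y ^ (lam - 1))) + β * (c * y ^ lam)
      = (-a * lam * (lam - 1) + (r - β) * lam + β) * (c * y ^ lam) := by
  rw [rpow_shift1 hy (lam - 1), rpow_shift1 hy lam]
  have hy' := hy.ne'
  field_simp

set_option maxHeartbeats 1600000 in
theorem stmt_19 (μ σ r β l p : ℝ) (hμ : 0 < μ) (hσ : 0 < σ) (hr : 0 < r) (hβ : 0 < β)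
    (hl : 0 < l) (hp0 : 0 < p) (hp1 : p < 1)
    (κ : ℝ) (hκdef : κ = (β - p * (μ ^ 2 / (2 * σ ^ 2 * (1 - p)) + r)) / (1 - p))
    (hκ : 0 < κ)
    (lam₁ lam₂ : ℝ) (hlam₁ : lam₁ < 0) (hlam₂ : 1 < lam₂)
    (hroot₁ : -(μ ^ 2 / (2 * σ ^ 2)) * lam₁ * (lam₁ - 1) + (r - β) * lam₁ + β = 0)
    (hroot₂ : -(μ ^ 2 / (2 * σ ^ 2)) * lam₂ * (lam₂ - 1) + (r - β) * lam₂ + β = 0)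
    (C D : ℝ)
    (hC : C = ((lam₁ - 1) / r - lam₁ / (β * p) + (1 - p) * lam₁ / (p * κ) + 1 / κ)
      * l ^ (p + lam₂ * (1 - p)) / (lam₂ - lam₁))
    (hD : D = ((lam₂ - 1) / r - lam₂ / (β * p) + (1 - p) * lam₂ / (p * κ) + 1 / κ)
      * l ^ (p + lam₁ * (1 - p)) / (lam₂ - lam₁))
    (v : ℝ → ℝ)
    (hv : v = fun y : ℝ =>
      if y ≤ l ^ (p - 1) then C * y ^ lam₂ + (1 - p) / (p * κ) * y ^ (p / (p - 1))
      else D * y ^ lam₁ + l ^ p / (β * p) - l / r * y) :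
    (C * (l ^ (p - 1)) ^ lam₂ + (1 - p) / (p * κ) * (l ^ (p - 1)) ^ (p / (p - 1))
        = D * (l ^ (p - 1)) ^ lam₁ + l ^ p / (β * p) - l / r * l ^ (p - 1)) ∧
    ContDiffOn ℝ 1 v (Ioi 0) ∧
    (∀ y : ℝ, 0 < y → y < l ^ (p - 1) →
      -(μ ^ 2 / (2 * σ ^ 2)) * y ^ 2 * deriv (deriv v) y + (r - β) * y * deriv v y
        + β * v y = (1 - p) / p * y ^ (p / (p - 1))) ∧
    (∀ y : ℝ, l ^ (p - 1) < y →
      -(μ ^ 2 / (2 * σ ^ 2)) * y ^ 2 * deriv (deriv v) y + (r - β) * y * deriv v y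
        + β * v y = l ^ p / p - l * y) := by
  have h1p : (0:ℝ) < 1 - p := by linarith
  have hp1' : p - 1 ≠ 0 := by intro h; linarith [sub_eq_zero.mp h]
  have hΔ : (0:ℝ) < lam₂ - lam₁ := by linarith
  set a : ℝ := μ ^ 2 / (2 * σ ^ 2) with ha_def
  have ha : 0 < a := by positivity
  set q : ℝ := p / (p - 1) with hq_def
  set Ae : ℝ := (1 - p) / (p * κ) with hAe_def
  set y₀ : ℝ := l ^ (p - 1) with hy₀_def
  have hy₀ : 0 < y₀ := Real.rpow_pos_of_pos hl _
  -- basic exponent arithmetic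
  have hy₀pow : ∀ t : ℝ, y₀ ^ t = l ^ ((p - 1) * t) := fun t =>
    (Real.rpow_mul hl.le (p - 1) t).symm
  have hX2 : l ^ (p + lam₂ * (1 - p)) * l ^ ((p - 1) * lam₂) = l ^ p := by
    rw [← Real.rpow_add hl]; congr 1; ring
  have hX1 : l ^ (p + lam₁ * (1 - p)) * l ^ ((p - 1) * lam₁) = l ^ p := by
    rw [← Real.rpow_add hl]; congr 1; ring
  have hX2' : l ^ (p + lam₂ * (1 - p)) * l ^ ((p - 1) * (lam₂ - 1)) = l := by
    rw [← Real.rpow_add hl, show p + lam₂ * (1 - p) + (p - 1) * (lam₂ - 1) = 1 by ring,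
      Real.rpow_one]
  have hX1' : l ^ (p + lam₁ * (1 - p)) * l ^ ((p - 1) * (lam₁ - 1)) = l := by
    rw [← Real.rpow_add hl, show p + lam₁ * (1 - p) + (p - 1) * (lam₁ - 1) = 1 by ring,
      Real.rpow_one]
  have hXq : y₀ ^ q = l ^ p := by
    rw [hy₀pow, show (p - 1) * q = p by rw [hq_def]; field_simp]
  have hXq' : y₀ ^ (q - 1) = l := by
    rw [hy₀pow, show (p - 1) * (q - 1) = 1 by rw [hq_def]; field_simp; ring,
      Real.rpow_one]
  have hXy : l / r * y₀ = l ^ p / r := by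
    rw [div_mul_eq_mul_div]
    congr 1
    rw [hy₀_def]
    nth_rewrite 1 [← Real.rpow_one l]
    rw [← Real.rpow_add hl]; congr 1; ring
  -- the coefficient expressions
  set c₁ : ℝ := (lam₁ - 1) / r - lam₁ / (β * p) + (1 - p) * lam₁ / (p * κ) + 1 / κ with hc₁
  set c₂ : ℝ := (lam₂ - 1) / r - lam₂ / (β * p) + (1 - p) * lam₂ / (p * κ) + 1 / κ with hc₂
  have h1 : C * y₀ ^ lam₂ = c₁ / (lam₂ - lam₁) * l ^ p := by
    rw [hC, hy₀pow]
    linear_combination (c₁ / (lam₂ - lam₁)) * hX2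
  have h1' : D * y₀ ^ lam₁ = c₂ / (lam₂ - lam₁) * l ^ p := by
    rw [hD, hy₀pow]
    linear_combination (c₂ / (lam₂ - lam₁)) * hX1
  have hs1 : C * (lam₂ * y₀ ^ (lam₂ - 1)) = c₁ * lam₂ / (lam₂ - lam₁) * l := by
    rw [hC, hy₀pow]
    linear_combination (c₁ * lam₂ / (lam₂ - lam₁)) * hX2'
  have hs1' : D * (lam₁ * y₀ ^ (lam₁ - 1)) = c₂ * lam₁ / (lam₂ - lam₁) * l := by
    rw [hD, hy₀pow]
    linear_combination (c₂ * lam₁ / (lam₂ - lam₁)) * hX1'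
  -- value matching
  have hmatch : C * y₀ ^ lam₂ + (1 - p) / (p * κ) * y₀ ^ q
      = D * y₀ ^ lam₁ + l ^ p / (β * p) - l / r * y₀ := by
    rw [h1, h1', hXq, hXy, ← hAe_def]
    rw [hc₁, hc₂, hAe_def]
    field_simp
    ring
  -- smooth fit
  have hsmooth : C * (lam₂ * y₀ ^ (lam₂ - 1)) + Ae * (q * y₀ ^ (q - 1))
      = D * (lam₁ * y₀ ^ (lam₁ - 1)) - l / r := by
    rw [hs1, hs1', hXq']
    rw [hc₁, hc₂, hAe_def, hq_def]
    field_simp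
    ring
  -- kappa relation and ODE coefficient for the q-power
  have hκrel : κ * ((1 - p) * (1 - p)) = β * (1 - p) - p * a - p * r * (1 - p) := by
    rw [hκdef, ha_def]
    have hσ2 : (2 : ℝ) * σ ^ 2 ≠ 0 := by positivity
    field_simp
    ring
  have hqode : -a * q * (q - 1) + (r - β) * q + β = κ := by
    rw [hq_def]
    clear_value a
    field_simp
    linear_combination (-1) * hκrel
  have hAeκ : (-a * q * (q - 1) + (r - β) * q + β) * Ae = (1 - p) / p := by
    rw [hqode, hAe_def]
    field_simp
  -- derivative structure
  set g₁ : ℝ → ℝ := fun y => C * (lam₂ * y ^ (lam₂ - 1)) + Ae * (q * y ^ (q - 1))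
    with hg₁_def
  set g₂ : ℝ → ℝ := fun y => D * (lam₁ * y ^ (lam₁ - 1)) - l / r with hg₂_def
  set v₁ : ℝ → ℝ := fun y => C * y ^ lam₂ + Ae * y ^ q with hv₁_def
  set v₂ : ℝ → ℝ := fun y => D * y ^ lam₁ + l ^ p / (β * p) - l / r * y with hv₂_def
  have hv1d : ∀ y : ℝ, 0 < y → HasDerivAt v₁ (g₁ y) y := by
    intro y hy
    exact ((Real.hasDerivAt_rpow_const (Or.inl hy.ne')).const_mul C).add
      ((Real.hasDerivAt_rpow_const (Or.inl hy.ne')).const_mul Ae)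
  have hv2d : ∀ y : ℝ, 0 < y → HasDerivAt v₂ (g₂ y) y := by
    intro y hy
    have ha1 : HasDerivAt (fun y : ℝ => D * y ^ lam₁ + l ^ p / (β * p))
        (D * (lam₁ * y ^ (lam₁ - 1))) y :=
      ((Real.hasDerivAt_rpow_const (Or.inl hy.ne')).const_mul D).add_const _
    have ha2 : HasDerivAt (fun y : ℝ => l / r * y) (l / r) y := by
      simpa using (hasDerivAt_id y).const_mul (l / r)
    exact ha1.sub ha2
  have hg1d : ∀ y : ℝ, 0 < y → HasDerivAt g₁
      (C * (lam₂ * ((lam₂ - 1) * y ^ (lam₂ - 1 - 1)))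
        + Ae * (q * ((q - 1) * y ^ (q - 1 - 1)))) y := by
    intro y hy
    exact (((Real.hasDerivAt_rpow_const (Or.inl hy.ne')).const_mul lam₂).const_mul C).add
      (((Real.hasDerivAt_rpow_const (Or.inl hy.ne')).const_mul q).const_mul Ae)
  have hg2d : ∀ y : ℝ, 0 < y → HasDerivAt g₂
      (D * (lam₁ * ((lam₁ - 1) * y ^ (lam₁ - 1 - 1)))) y := by
    intro y hy
    exact ((((Real.hasDerivAt_rpow_const (Or.inl hy.ne')).const_mul lam₁).const_mul D).sub_const
      (l / r))
  -- v agrees with the pieces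
  have hveq1 : ∀ z : ℝ, z ≤ y₀ → v z = v₁ z := by
    intro z hz; rw [hv]; simp [hz]; rfl
  have hveq2 : ∀ z : ℝ, y₀ < z → v z = v₂ z := by
    intro z hz; rw [hv]; simp [not_le.mpr hz]; rfl
  have hveq2' : ∀ z : ℝ, y₀ ≤ z → v z = v₂ z := by
    intro z hz
    rcases eq_or_lt_of_le hz with h | h
    · rw [← h, hveq1 y₀ le_rfl, hv₁_def, hv₂_def]; exact hmatch
    · exact hveq2 z h
  set g : ℝ → ℝ := fun y => if y ≤ y₀ then g₁ y else g₂ y with hg_def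
  have hsmooth' : g₂ y₀ = g₁ y₀ := by rw [hg₁_def, hg₂_def]; exact hsmooth.symm
  have hvd : ∀ y : ℝ, 0 < y → HasDerivAt v (g y) y := by
    intro y hy
    rcases lt_trichotomy y y₀ with h | h | h
    · have hgy : g y = g₁ y := by rw [hg_def]; simp [h.le]
      rw [hgy]
      refine (hv1d y hy).congr_of_eventuallyEq ?_
      filter_upwards [Iio_mem_nhds h] with z hz
      exact hveq1 z (le_of_lt hz)
    · subst h
      have hgy : g y₀ = g₁ y₀ := by rw [hg_def]; simp
      rw [hgy]
      have hleft : HasDerivWithinAt v (g₁ y₀) (Iic y₀) y₀ := by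
        refine ((hv1d y₀ hy₀).hasDerivWithinAt).congr ?_ (hveq1 y₀ le_rfl)
        intro z hz; exact hveq1 z hz
      have hright : HasDerivWithinAt v (g₁ y₀) (Ici y₀) y₀ := by
        have h2 : HasDerivWithinAt v₂ (g₁ y₀) (Ici y₀) y₀ := by
          rw [← hsmooth']; exact (hv2d y₀ hy₀).hasDerivWithinAt
        refine h2.congr ?_ (hveq2' y₀ le_rfl)
        intro z hz; exact hveq2' z hz
      have := hleft.union hright
      rw [Iic_union_Ici, hasDerivWithinAt_univ] at this
      exact this
    · have hgy : g y = g₂ y := by rw [hg_def]; simp [not_le.mpr h]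
      rw [hgy]
      refine (hv2d y hy).congr_of_eventuallyEq ?_
      filter_upwards [Ioi_mem_nhds h] with z hz
      exact hveq2 z hz
  have hderiv : ∀ y ∈ Ioi (0:ℝ), deriv v y = g y := fun y hy => (hvd y hy).deriv
  -- continuity of g on Ioi 0
  have hg1c : ∀ y : ℝ, 0 < y → ContinuousAt g₁ y := fun y hy =>
    (hg1d y hy).differentiableAt.continuousAt
  have hg2c : ∀ y : ℝ, 0 < y → ContinuousAt g₂ y := fun y hy =>
    (hg2d y hy).differentiableAt.continuousAt
  have hgeq1 : ∀ z : ℝ, z ≤ y₀ → g z = g₁ z := by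
    intro z hz; rw [hg_def]; simp [hz]
  have hgeq2 : ∀ z : ℝ, y₀ < z → g z = g₂ z := by
    intro z hz; rw [hg_def]; simp [not_le.mpr hz]
  have hgc : ∀ y : ℝ, 0 < y → ContinuousAt g y := by
    intro y hy
    rcases lt_trichotomy y y₀ with h | h | h
    · refine (hg1c y hy).congr ?_
      filter_upwards [Iio_mem_nhds h] with z hz
      exact (hgeq1 z hz.le).symm
    · subst h
      have hgy : g y₀ = g₁ y₀ := hgeq1 y₀ le_rfl
      unfold ContinuousAt
      rw [hgy, ← nhdsLE_sup_nhdsGT y₀, tendsto_sup]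
      constructor
      · refine Tendsto.congr' ?_ ((hg1c y₀ hy₀).continuousWithinAt.tendsto)
        filter_upwards [self_mem_nhdsWithin] with z hz
        exact (hgeq1 z hz).symm
      · rw [← hsmooth']
        refine Tendsto.congr' ?_ ((hg2c y₀ hy₀).continuousWithinAt.tendsto)
        filter_upwards [self_mem_nhdsWithin] with z hz
        exact (hgeq2 z hz).symm
    · refine (hg2c y hy).congr ?_
      filter_upwards [Ioi_mem_nhds h] with z hz
      exact (hgeq2 z hz).symm
  -- C¹
  have hcd : ContDiffOn ℝ 1 v (Ioi 0) := by
    have : (1 : WithTop ℕ∞) = 0 + 1 := by norm_num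
    rw [this, contDiffOn_succ_iff_deriv_of_isOpen isOpen_Ioi]
    refine ⟨fun y hy => (hvd y hy).differentiableAt.differentiableWithinAt, by simp, ?_⟩
    rw [contDiffOn_zero]
    intro y hy
    refine ((hgc y hy).continuousWithinAt).congr hderiv (hderiv y hy)
  refine ⟨hmatch, hcd, ?_, ?_⟩
  · -- region 1
    intro y hy hyu
    have hvv : v =ᶠ[𝓝 y] v₁ := by
      filter_upwards [Iio_mem_nhds hyu] with z hz
      exact hveq1 z hz.le
    have hdg : deriv v =ᶠ[𝓝 y] g₁ := by
      refine hvv.deriv.trans ?_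
      filter_upwards [Ioi_mem_nhds hy] with z hz
      exact (hv1d z hz).deriv
    have e0 : v y = v₁ y := hveq1 y hyu.le
    have e1 : deriv v y = g₁ y := hdg.eq_of_nhds
    have e2 : deriv (deriv v) y = C * (lam₂ * ((lam₂ - 1) * y ^ (lam₂ - 1 - 1)))
        + Ae * (q * ((q - 1) * y ^ (q - 1 - 1))) := by
      rw [hdg.deriv_eq]
      exact (hg1d y hy).deriv
    rw [e0, e1, e2, hv₁_def, hg₁_def]
    have E2 := euler_term hy a r β C lam₂
    have Eq := euler_term hy a r β Ae q
    linear_combination E2 + Eq + (C * y ^ lam₂) * hroot₂ + (y ^ q) * hAeκ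
      + ((y ^ q) * Ae) * hqode - ((y ^ q) * Ae) * hqode
  · -- region 2
    intro y hyl
    have hy : 0 < y := lt_trans hy₀ hyl
    have hvv : v =ᶠ[𝓝 y] v₂ := by
      filter_upwards [Ioi_mem_nhds hyl] with z hz
      exact hveq2 z hz
    have hdg : deriv v =ᶠ[𝓝 y] g₂ := by
      refine hvv.deriv.trans ?_
      filter_upwards [Ioi_mem_nhds hy] with z hz
      exact (hv2d z hz).deriv
    have e0 : v y = v₂ y := hveq2 y hyl
    have e1 : deriv v y = g₂ y := hdg.eq_of_nhds
    have e2 : deriv (deriv v) y = D * (lam₁ * ((lam₁ - 1) * y ^ (lam₁ - 1 - 1))) := by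
      rw [hdg.deriv_eq]
      exact (hg2d y hy).deriv
    rw [e0, e1, e2, hv₂_def, hg₂_def]
    have E1 := euler_term hy a r β D lam₁
    have hc1 : β * (l ^ p / (β * p)) = l ^ p / p := by
      field_simp
    have hc2 : (r - β) * (l / r) * y + β * (l / r) * y = l * y := by
      field_simp; ring
    linear_combination E1 + (D * y ^ lam₁) * hroot₁ + hc1 - hc2
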